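/- Let X₁ and X₂ be Banach spaces, Ω a compact metric space, U an open subset of X₁, n ≥ 0, and f : Ω × U → X₂ a continuous map whose partial Fréchet derivatives ∂ᵏf/∂xᵏ : Ω × U → L^k(X₁;X₂) in the second variable exist and are continuous for 0 ≤ k ≤ n. Then the superposition operator F : C(Ω;U) → C(Ω;X₂), (Fx)(ω) = f(ω, x(ω)), is of class Cⁿ. -/

import Mathlib

noncomputable section

open Metric Set Asymptotics

namespace SuperpositionAux

variable {Ω X₁ E : Type*} [MetricSpace Ω] [CompactSpace Ω]
  [NormedAddCommGroup X₁] [NormedSpace ℝ X₁]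
  [NormedAddCommGroup E] [NormedSpace ℝ E]

/-- Uniform continuity of `g` near the (compact) graph of `x`. -/
lemma unif_key {U : Set X₁} (hU : IsOpen U) (g : Ω × X₁ → E)
    (hg : ContinuousOn g (Set.univ ×ˢ U)) (x : C(Ω, X₁)) (hx : ∀ ω, x ω ∈ U)
    {ε : ℝ} (hε : 0 < ε) :
    ∃ δ > 0, ∀ ω v, ‖v - x ω‖ < δ → v ∈ U ∧ ‖g (ω, v) - g (ω, x ω)‖ < ε := by
  rcases isEmpty_or_nonempty Ω with h | h
  · exact ⟨1, one_pos, fun ω => isEmptyElim ω⟩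
  have H : ∀ ω : Ω, ∃ r > 0, Metric.ball ((ω, x ω) : Ω × X₁) r ⊆ Set.univ ×ˢ U ∧
      ∀ q ∈ Metric.ball ((ω, x ω) : Ω × X₁) r, dist (g q) (g (ω, x ω)) < ε / 2 := by
    intro ω
    have hmem : ((ω, x ω) : Ω × X₁) ∈ Set.univ ×ˢ U := ⟨trivial, hx ω⟩
    have hopen : IsOpen (Set.univ ×ˢ U : Set (Ω × X₁)) := isOpen_univ.prod hU
    have hca : ContinuousAt g (ω, x ω) := hg.continuousAt (hopen.mem_nhds hmem)
    obtain ⟨r₁, hr₁, hball₁⟩ := (Metric.continuousAt_iff.1 hca) (ε / 2) (half_pos hε)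
    obtain ⟨r₂, hr₂, hball₂⟩ := Metric.isOpen_iff.1 hopen _ hmem
    refine ⟨min r₁ r₂, lt_min hr₁ hr₂, ?_, ?_⟩
    · exact fun q hq => hball₂ (Metric.ball_subset_ball (min_le_right _ _) hq)
    · exact fun q hq => hball₁ (lt_of_lt_of_le (Metric.mem_ball.1 hq) (min_le_left _ _))
  choose r hr hrU hrg using H
  set V : Ω → Set Ω := fun ω => Metric.ball ω (r ω / 4) ∩ x ⁻¹' Metric.ball (x ω) (r ω / 4)
  have hVopen : ∀ ω, IsOpen (V ω) := fun ω =>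
    (Metric.isOpen_ball).inter (Metric.isOpen_ball.preimage x.continuous)
  have hVmem : ∀ ω, ω ∈ V ω := fun ω =>
    ⟨Metric.mem_ball_self (by linarith [hr ω]), Metric.mem_ball_self (by linarith [hr ω])⟩
  obtain ⟨t, ht⟩ := isCompact_univ.elim_finite_subcover V hVopen
    (fun ω _ => Set.mem_iUnion.2 ⟨ω, hVmem ω⟩)
  have htne : t.Nonempty := by
    obtain ⟨ω⟩ := h
    obtain ⟨i, hit, -⟩ := Set.mem_iUnion₂.1 (ht (Set.mem_univ ω))
    exact ⟨i, hit⟩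
  refine ⟨t.inf' htne (fun ω => r ω / 4), ?_, ?_⟩
  · rw [gt_iff_lt, Finset.lt_inf'_iff]
    exact fun i _ => by linarith [hr i]
  intro ω v hv
  obtain ⟨i, hit, hωi⟩ := Set.mem_iUnion₂.1 (ht (Set.mem_univ ω))
  have hδi : t.inf' htne (fun ω => r ω / 4) ≤ r i / 4 := Finset.inf'_le _ hit
  have h1 : dist ω i < r i / 4 := hωi.1
  have h2 : dist (x ω) (x i) < r i / 4 := hωi.2
  have hvxi : dist v (x i) < r i / 2 := by
    calc dist v (x i) ≤ dist v (x ω) + dist (x ω) (x i) := dist_triangle _ _ _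
    _ < r i / 4 + r i / 4 := by
        rw [dist_eq_norm]
        exact add_lt_add (lt_of_lt_of_le hv hδi) h2
    _ = r i / 2 := by ring
  have hmem1 : ((ω, v) : Ω × X₁) ∈ Metric.ball ((i, x i) : Ω × X₁) (r i) := by
    rw [Metric.mem_ball, Prod.dist_eq, max_lt_iff]
    exact ⟨by linarith [hr i], by linarith [hr i]⟩
  have hmem2 : ((ω, x ω) : Ω × X₁) ∈ Metric.ball ((i, x i) : Ω × X₁) (r i) := by
    rw [Metric.mem_ball, Prod.dist_eq, max_lt_iff]
    exact ⟨by linarith [hr i], by linarith [hr i]⟩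
  refine ⟨(hrU i hmem1).2, ?_⟩
  have := hrg i _ hmem1
  have h4 := hrg i _ hmem2
  rw [← dist_eq_norm]
  calc dist (g (ω, v)) (g (ω, x ω))
      ≤ dist (g (ω, v)) (g (i, x i)) + dist (g (i, x i)) (g (ω, x ω)) := dist_triangle _ _ _
    _ < ε / 2 + ε / 2 := add_lt_add this (by rw [dist_comm]; exact h4)
    _ = ε := by ring

variable (U : Set X₁)

open Classical in
/-- The superposition map. -/
def superMap (g : Ω × X₁ → E) (hg : ContinuousOn g (Set.univ ×ˢ U)) (x : C(Ω, X₁)) :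
    C(Ω, E) :=
  if h : ∀ ω, x ω ∈ U then
    ContinuousMap.mk (fun ω => g (ω, x ω))
      (hg.comp_continuous (continuous_id.prodMk x.continuous) (fun a => ⟨trivial, h a⟩))
  else 0

lemma superMap_apply {g : Ω × X₁ → E} {hg : ContinuousOn g (Set.univ ×ˢ U)} {x : C(Ω, X₁)}
    (h : ∀ ω, x ω ∈ U) (ω : Ω) : superMap U g hg x ω = g (ω, x ω) := by
  classical
  rw [superMap, dif_pos h]; rfl

lemma continuousOn_superMap (hU : IsOpen U) (g : Ω × X₁ → E)
    (hg : ContinuousOn g (Set.univ ×ˢ U)) :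
    ContinuousOn (superMap U g hg) {x : C(Ω, X₁) | ∀ ω, x ω ∈ U} := by
  intro x hx
  rw [Metric.continuousWithinAt_iff]
  intro ε hε
  obtain ⟨δ, hδ, hkey⟩ := unif_key hU g hg x hx (half_pos hε)
  refine ⟨δ, hδ, fun y hy hyx => ?_⟩
  rw [ContinuousMap.dist_lt_iff hε]
  intro ω
  rw [superMap_apply U hy, superMap_apply U hx, dist_eq_norm]
  have hvx : ‖y ω - x ω‖ < δ := by
    rw [← dist_eq_norm]
    exact lt_of_le_of_lt (ContinuousMap.dist_apply_le_dist ω) hyx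
  exact lt_trans (hkey ω (y ω) hvx).2 (half_lt_self hε)

/-- Pointwise application of a continuous family of continuous linear maps, bundled. -/
def applyCLM (G : C(Ω, X₁ →L[ℝ] E)) : C(Ω, X₁) →L[ℝ] C(Ω, E) :=
  LinearMap.mkContinuous
    { toFun := fun h => ContinuousMap.mk (fun ω => G ω (h ω))
        (isBoundedBilinearMap_apply.continuous.comp (G.continuous.prodMk h.continuous))
      map_add' := fun h₁ h₂ => by ext ω; simp
      map_smul' := fun c h => by ext ω; simp }
    ‖G‖ (fun h => by
      refine (ContinuousMap.norm_le _ (by positivity)).2 (fun ω => ?_)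
      calc ‖G ω (h ω)‖ ≤ ‖G ω‖ * ‖h ω‖ := (G ω).le_opNorm _
      _ ≤ ‖G‖ * ‖h‖ := mul_le_mul (G.norm_coe_le_norm ω) (h.norm_coe_le_norm ω)
          (norm_nonneg _) (le_trans (norm_nonneg (G ω)) (G.norm_coe_le_norm ω)))

@[simp] lemma applyCLM_apply (G : C(Ω, X₁ →L[ℝ] E)) (h : C(Ω, X₁)) (ω : Ω) :
    applyCLM G h ω = G ω (h ω) := rfl

variable {X₂ : Type*} [NormedAddCommGroup X₂] [NormedSpace ℝ X₂]

/-- Pointwise application of a continuous family of continuous multilinear maps. -/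
def superCMM (k : ℕ) (G : C(Ω, ContinuousMultilinearMap ℝ (fun _ : Fin k => X₁) X₂)) :
    ContinuousMultilinearMap ℝ (fun _ : Fin k => C(Ω, X₁)) C(Ω, X₂) :=
  MultilinearMap.mkContinuous
    { toFun := fun m => ContinuousMap.mk (fun ω => G ω (fun i => m i ω))
        (ContinuousEval.continuous_eval.comp
          (G.continuous.prodMk (continuous_pi (fun i => (m i).continuous))))
      map_update_add' := fun m j z₁ z₂ => by
        ext ω
        have : ∀ (w : C(Ω, X₁)), (fun i => Function.update m j w i ω) =
            Function.update (fun i => m i ω) j (w ω) := by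
          intro w
          funext i
          rcases eq_or_ne i j with rfl | hij
          · simp
          · simp [Function.update_of_ne hij]
        simp [this]
      map_update_smul' := fun m j c z => by
        ext ω
        have : ∀ (w : C(Ω, X₁)), (fun i => Function.update m j w i ω) =
            Function.update (fun i => m i ω) j (w ω) := by
          intro w
          funext i
          rcases eq_or_ne i j with rfl | hij
          · simp
          · simp [Function.update_of_ne hij]
        simp [this] }
    ‖G‖ (fun m => by
      refine (ContinuousMap.norm_le _ (by positivity)).2 (fun ω => ?_)
      calc ‖G ω (fun i => m i ω)‖ ≤ ‖G ω‖ * ∏ i, ‖m i ω‖ := (G ω).le_opNorm _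
      _ ≤ ‖G‖ * ∏ i, ‖m i‖ := by
          refine mul_le_mul (G.norm_coe_le_norm ω) ?_ ?_
            (le_trans (norm_nonneg (G ω)) (G.norm_coe_le_norm ω))
          · exact Finset.prod_le_prod (fun i _ => norm_nonneg _)
              (fun i _ => (m i).norm_coe_le_norm ω)
          · exact Finset.prod_nonneg (fun i _ => norm_nonneg _))

@[simp] lemma superCMM_apply (k : ℕ)
    (G : C(Ω, ContinuousMultilinearMap ℝ (fun _ : Fin k => X₁) X₂))
    (m : Fin k → C(Ω, X₁)) (ω : Ω) :
    superCMM k G m ω = G ω (fun i => m i ω) := rfl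

lemma superCMM_norm_le (k : ℕ)
    (G : C(Ω, ContinuousMultilinearMap ℝ (fun _ : Fin k => X₁) X₂)) :
    ‖superCMM k G‖ ≤ ‖G‖ := by
  unfold superCMM
  exact MultilinearMap.mkContinuous_norm_le _ (norm_nonneg G) _

/-- `superCMM` as a linear map in the family. -/
def superCMMLin (k : ℕ) :
    C(Ω, ContinuousMultilinearMap ℝ (fun _ : Fin k => X₁) X₂) →ₗ[ℝ]
      ContinuousMultilinearMap ℝ (fun _ : Fin k => C(Ω, X₁)) C(Ω, X₂) where
  toFun := superCMM k
  map_add' G₁ G₂ := by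
    refine ContinuousMultilinearMap.ext (fun m => ?_)
    refine ContinuousMap.ext (fun ω => ?_)
    simp [superCMM_apply]
  map_smul' c G := by
    refine ContinuousMultilinearMap.ext (fun m => ?_)
    refine ContinuousMap.ext (fun ω => ?_)
    simp [superCMM_apply]

lemma superCMM_sub (k : ℕ)
    (A B : C(Ω, ContinuousMultilinearMap ℝ (fun _ : Fin k => X₁) X₂)) :
    superCMM k (A - B) = superCMM k A - superCMM k B :=
  map_sub (superCMMLin k) A B

lemma lipschitzWith_superCMM (k : ℕ) :
    LipschitzWith 1 (superCMM (Ω := Ω) (X₁ := X₁) (X₂ := X₂) k) := by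
  refine (lipschitzWith_iff_norm_sub_le
    (E := C(Ω, ContinuousMultilinearMap ℝ (fun _ : Fin k => X₁) X₂))
    (F := ContinuousMultilinearMap ℝ (fun _ : Fin k => C(Ω, X₁)) C(Ω, X₂))
    (f := superCMM k) (C := 1)).2 (fun A B => ?_)
  rw [NNReal.coe_one, one_mul, ← superCMM_sub]
  exact superCMM_norm_le k _

/-- The key differentiability lemma for the superposition operator. -/
lemma hasFDerivWithinAt_superMap (hU : IsOpen U) (g : Ω × X₁ → E)
    (g' : Ω × X₁ → X₁ →L[ℝ] E)
    (hg : ContinuousOn g (Set.univ ×ˢ U)) (hg' : ContinuousOn g' (Set.univ ×ˢ U))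
    (hd : ∀ ω, ∀ v ∈ U, HasFDerivWithinAt (fun w => g (ω, w)) (g' (ω, v)) U v)
    (x : C(Ω, X₁)) (hx : ∀ ω, x ω ∈ U) :
    HasFDerivWithinAt (superMap U g hg) (applyCLM (superMap U g' hg' x))
      {y : C(Ω, X₁) | ∀ ω, y ω ∈ U} x := by
  rw [hasFDerivWithinAt_iff_isLittleO, Asymptotics.isLittleO_iff]
  intro c hc
  obtain ⟨δ, hδ, hkey⟩ := unif_key hU g' hg' x hx hc
  have hball : ∀ᶠ y in nhdsWithin x {y : C(Ω, X₁) | ∀ ω, y ω ∈ U}, dist y x < δ :=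
    Filter.Eventually.filter_mono nhdsWithin_le_nhds
      (Metric.eventually_nhds_iff.2 ⟨δ, hδ, fun {y} hy => hy⟩)
  filter_upwards [hball, eventually_mem_nhdsWithin] with y hyδ hy
  have hyx : ∀ ω, ‖y ω - x ω‖ < δ := fun ω => by
    rw [← dist_eq_norm]
    exact lt_of_le_of_lt (ContinuousMap.dist_apply_le_dist ω) hyδ
  refine (ContinuousMap.norm_le _ (by positivity)).2 (fun ω => ?_)
  have hsub : Metric.ball (x ω) δ ⊆ U := fun w hw =>
    (hkey ω w (by rwa [← dist_eq_norm, ← Metric.mem_ball])).1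
  have hder : ∀ v ∈ Metric.ball (x ω) δ,
      HasFDerivWithinAt (fun w => g (ω, w)) (g' (ω, v)) (Metric.ball (x ω) δ) v :=
    fun v hv => (hd ω v (hsub hv)).mono hsub
  have hbound : ∀ v ∈ Metric.ball (x ω) δ, ‖g' (ω, v) - g' (ω, x ω)‖ ≤ c := fun v hv =>
    le_of_lt (hkey ω v (by rwa [← dist_eq_norm, ← Metric.mem_ball])).2
  have hxmem : x ω ∈ Metric.ball (x ω) δ := Metric.mem_ball_self hδ
  have hymem : y ω ∈ Metric.ball (x ω) δ := by
    rw [Metric.mem_ball, dist_eq_norm]; exact hyx ω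
  have key := Convex.norm_image_sub_le_of_norm_hasFDerivWithin_le' hder hbound
    (convex_ball _ _) hxmem hymem
  have happ : (superMap U g hg y - superMap U g hg x -
      (applyCLM (superMap U g' hg' x)) (y - x)) ω =
      g (ω, y ω) - g (ω, x ω) - g' (ω, x ω) (y ω - x ω) := by
    simp [superMap_apply U hy, superMap_apply U hx]
  rw [happ]
  calc ‖g (ω, y ω) - g (ω, x ω) - g' (ω, x ω) (y ω - x ω)‖ ≤ c * ‖y ω - x ω‖ := key
  _ ≤ c * ‖y - x‖ := by
      refine mul_le_mul_of_nonneg_left ?_ hc.le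
      exact le_trans (le_of_eq (by simp)) ((y - x).norm_coe_le_norm ω)

end SuperpositionAux

open SuperpositionAux

/-- **The superposition operator is `Cⁿ`.**
Let `X₁`, `X₂` be Banach spaces, `Ω` a compact metric space, `U ⊆ X₁` open, and let
`f : Ω × U → X₂` be continuous such that the partial Fréchet derivatives
`∂ᵏf/∂xᵏ : Ω × U → L^k(X₁;X₂)` in the second variable exist and are (jointly) continuous
for `0 ≤ k ≤ n`.  Then the superposition operator `F : C(Ω;U) → C(Ω;X₂)`,
`(F x)(ω) = f(ω, x(ω))`, is of class `Cⁿ`. -/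
theorem superposition_operator_Cn {Ω X₁ X₂ : Type*}
    [MetricSpace Ω] [CompactSpace Ω]
    [NormedAddCommGroup X₁] [NormedSpace ℝ X₁] [CompleteSpace X₁]
    [NormedAddCommGroup X₂] [NormedSpace ℝ X₂] [CompleteSpace X₂]
    (U : Set X₁) (hUopen : IsOpen U) (n : ℕ)
    (f : Ω × X₁ → X₂)
    (hsm : ∀ ω : Ω, ContDiffOn ℝ (n : ℕ∞) (fun v => f (ω, v)) U)
    (hcont : ∀ k : ℕ, k ≤ n → ContinuousOn
      (fun p : Ω × X₁ => iteratedFDerivWithin ℝ k (fun v => f (p.1, v)) U p.2)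
      (Set.univ ×ˢ U)) :
    ∃ F : C(Ω, X₁) → C(Ω, X₂),
      (∀ x : C(Ω, X₁), (∀ ω, x ω ∈ U) → ∀ ω, F x ω = f (ω, x ω)) ∧
      ContDiffOn ℝ (n : ℕ∞) F {x : C(Ω, X₁) | ∀ ω, x ω ∈ U} := by
  classical
  -- the `k`-th partial derivative of `f` in the second variable
  set g : ∀ k : ℕ, Ω × X₁ → ContinuousMultilinearMap ℝ (fun _ : Fin k => X₁) X₂ :=
    fun k p => iteratedFDerivWithin ℝ k (fun v => f (p.1, v)) U p.2 with hg_def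
  have hgc : ∀ k : ℕ, k ≤ n → ContinuousOn (g k) (Set.univ ×ˢ U) := hcont
  -- continuity of `f` itself on `univ ×ˢ U`
  have hfc : ContinuousOn f (Set.univ ×ˢ U) := by
    have : ContinuousOn (fun p : Ω × X₁ =>
        (continuousMultilinearCurryFin0 ℝ X₁ X₂) (g 0 p)) (Set.univ ×ˢ U) :=
      (continuousMultilinearCurryFin0 ℝ X₁ X₂).continuous.comp_continuousOn
        (hgc 0 (Nat.zero_le n))
    refine this.congr (fun p hp => ?_)
    simp [hg_def, iteratedFDerivWithin_zero_apply]
  refine ⟨superMap U f hfc, fun x hx ω => superMap_apply U hx ω, ?_⟩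
  set S : Set C(Ω, X₁) := {x : C(Ω, X₁) | ∀ ω, x ω ∈ U} with hS_def
  -- the Taylor series of the superposition operator
  set ps : C(Ω, X₁) → FormalMultilinearSeries ℝ C(Ω, X₁) C(Ω, X₂) :=
    fun x k => if hk : k ≤ n then superCMM k (superMap U (g k) (hgc k hk) x) else 0
    with hps_def
  have huniq : UniqueDiffOn ℝ U := hUopen.uniqueDiffOn
  have htaylor : HasFTaylorSeriesUpToOn ((n : ℕ∞) : WithTop ℕ∞) (superMap U f hfc) ps S := by
    constructor
    · -- zero coefficient
      intro x hx
      have hx' : ∀ ω, x ω ∈ U := hx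
      ext ω
      rw [hps_def]
      simp only [dif_pos (Nat.zero_le n)]
      rw [ContinuousMultilinearMap.curry0_apply]
      rw [superCMM_apply, superMap_apply U hx']
      rw [superMap_apply U hx']
      simp [hg_def, iteratedFDerivWithin_zero_apply]
    · -- derivatives
      intro k hk x hx
      have hkn : k < n := by exact_mod_cast hk
      have hk1 : k + 1 ≤ n := hkn
      have hx' : ∀ ω, x ω ∈ U := hx
      -- the derivative kernel
      set e := continuousMultilinearCurryLeftEquiv ℝ (fun _ : Fin (k + 1) => X₁) X₂ with he_def
      set g' : Ω × X₁ → X₁ →L[ℝ] ContinuousMultilinearMap ℝ (fun _ : Fin k => X₁) X₂ :=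
        fun p => e (g (k + 1) p) with hg'_def
      have hg'c : ContinuousOn g' (Set.univ ×ˢ U) :=
        (e.continuous.comp_continuousOn (hgc (k + 1) hk1))
      have hg'eq : ∀ ω v, g' (ω, v) =
          fderivWithin ℝ (fun w => g k (ω, w)) U v := by
        intro ω v
        have := congrFun (iteratedFDerivWithin_succ_eq_comp_left
          (𝕜 := ℝ) (f := fun w => f (ω, w)) (s := U) (n := k)) v
        rw [hg'_def]
        simp only [hg_def]
        rw [this]
        exact e.apply_symm_apply _
      have hd : ∀ ω, ∀ v ∈ U, HasFDerivWithinAt (fun w => g k (ω, w)) (g' (ω, v)) U v := by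
        intro ω v hv
        have hdiff : DifferentiableOn ℝ
            (iteratedFDerivWithin ℝ k (fun w => f (ω, w)) U) U :=
          (hsm ω).differentiableOn_iteratedFDerivWithin (by exact_mod_cast hkn) huniq
        have := (hdiff v hv).hasFDerivWithinAt
        rw [hg'eq ω v]
        exact this
      have hder := hasFDerivWithinAt_superMap U hUopen (g k) g' (hgc k hkn.le) hg'c hd x hx'
      have hlo : (fun y => superMap U (g k) (hgc k hkn.le) y - superMap U (g k) (hgc k hkn.le) x
          - (applyCLM (superMap U g' hg'c x)) (y - x)) =o[nhdsWithin x S]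
          (fun y => y - x) := by
        rw [hasFDerivWithinAt_iff_isLittleO] at hder
        exact hder
      have heqfun : (fun y => ps y k) =
          (fun y => superCMM k (superMap U (g k) (hgc k hkn.le) y)) := by
        funext y
        rw [hps_def]
        simp only [dif_pos hkn.le]
      rw [heqfun, hasFDerivWithinAt_iff_isLittleO]
      -- identify the curried next coefficient
      have hcurry : ∀ h : C(Ω, X₁), (ps x (k+1)).curryLeft h =
          superCMM k ((applyCLM (superMap U g' hg'c x)) h) := by
        intro h
        refine ContinuousMultilinearMap.ext (fun m => ?_)
        refine ContinuousMap.ext (fun ω => ?_)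
        rw [ContinuousMultilinearMap.curryLeft_apply]
        rw [hps_def]
        simp only [dif_pos hk1]
        rw [superCMM_apply, superMap_apply U hx']
        rw [superCMM_apply, applyCLM_apply, superMap_apply U hx']
        rw [hg'_def]
        simp only [he_def, continuousMultilinearCurryLeftEquiv_apply]
        congr 1
        funext i
        refine Fin.cases ?_ (fun j => ?_) i <;> simp
      have hbig : (fun y => superCMM k (superMap U (g k) (hgc k hkn.le) y)
          - superCMM k (superMap U (g k) (hgc k hkn.le) x)
          - (ps x (k+1)).curryLeft (y - x)) =O[nhdsWithin x S]
          (fun y => superMap U (g k) (hgc k hkn.le) y - superMap U (g k) (hgc k hkn.le) x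
            - (applyCLM (superMap U g' hg'c x)) (y - x)) := by
        refine Asymptotics.isBigO_of_le _ (fun y => ?_)
        have hkey : superCMM k (superMap U (g k) (hgc k hkn.le) y)
            - superCMM k (superMap U (g k) (hgc k hkn.le) x)
            - (ps x (k+1)).curryLeft (y - x) =
            superCMM k (superMap U (g k) (hgc k hkn.le) y - superMap U (g k) (hgc k hkn.le) x
              - (applyCLM (superMap U g' hg'c x)) (y - x)) := by
          rw [superCMM_sub, superCMM_sub, hcurry]
        rw [hkey]
        exact superCMM_norm_le k _
      exact hbig.trans_isLittleO hlo
    · -- continuity of the coefficients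
      intro k hk x hx
      have hkn : k ≤ n := by exact_mod_cast hk
      have heqfun : (fun y => ps y k) =
          (fun y => superCMM k (superMap U (g k) (hgc k hkn) y)) := by
        funext y
        rw [hps_def]
        simp only [dif_pos hkn]
      rw [heqfun]
      exact ((lipschitzWith_superCMM k).continuous.comp_continuousOn
        (continuousOn_superMap U hUopen (g k) (hgc k hkn))) x hx
  exact htaylor.contDiffOn
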